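/- arXiv:1311.2035 — 5 statements merged into one kernel-verified Lean document; each statement's English description precedes it below -/
import Mathlib

section
/- For a continuously differentiable function u : [0,l] → ℝ with u(0) = u(l) = 0, one has ∫₀ˡ u(x)² dx ≤ (l²/2) ∫₀ˡ u'(x)² dx. -/
open MeasureTheory intervalIntegral

lemma cs_aux (x : ℝ) (hx : 0 < x) (g : ℝ → ℝ) (hg : ContinuousOn g (Set.Icc 0 x)) :
    (∫ t in (0:ℝ)..x, g t)^2 ≤ x * ∫ t in (0:ℝ)..x, (g t)^2 := by
  set A := ∫ t in (0:ℝ)..x, g t with hA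
  have hgi : IntervalIntegrable g volume 0 x := by
    apply ContinuousOn.intervalIntegrable
    rwa [Set.uIcc_of_le hx.le]
  have hgi2 : IntervalIntegrable (fun t => (g t)^2) volume 0 x := by
    apply ContinuousOn.intervalIntegrable
    rw [Set.uIcc_of_le hx.le]
    exact hg.pow 2
  have h0 : (0:ℝ) ≤ ∫ t in (0:ℝ)..x, (g t - A / x)^2 :=
    intervalIntegral.integral_nonneg hx.le (fun t _ => sq_nonneg _)
  have hexp : (∫ t in (0:ℝ)..x, (g t - A / x)^2)
      = (∫ t in (0:ℝ)..x, (g t)^2) - 2 * (A / x) * A + (A / x)^2 * x := by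
    have : ∀ t : ℝ, (g t - A / x)^2 = (g t)^2 - (2 * (A / x)) * g t + (A / x)^2 := by
      intro t; ring
    simp_rw [this]
    rw [intervalIntegral.integral_add ((hgi2.sub (hgi.const_mul _))) intervalIntegrable_const,
        intervalIntegral.integral_sub hgi2 (hgi.const_mul _),
        intervalIntegral.integral_const_mul, intervalIntegral.integral_const]
    rw [← hA]
    simp only [smul_eq_mul]
    field_simp
    ring
  rw [hexp] at h0
  have hx' : x ≠ 0 := ne_of_gt hx
  have e1 : 2 * (A / x) * A = 2 * (A^2 / x) := by ring
  have e2 : (A / x)^2 * x = A^2 / x := by field_simp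
  rw [e1, e2] at h0
  have h1 : A^2 / x ≤ ∫ t in (0:ℝ)..x, (g t)^2 := by linarith
  have := (div_le_iff₀ hx).mp h1
  linarith [this, mul_comm (∫ t in (0:ℝ)..x, (g t)^2) x]

theorem friedrichs_inequality (l : ℝ) (hl : 0 < l) (u u' : ℝ → ℝ)
    (hu : ∀ x ∈ Set.Icc (0:ℝ) l, HasDerivAt u (u' x) x)
    (hu' : ContinuousOn u' (Set.Icc 0 l))
    (h0 : u 0 = 0) (hL : u l = 0) :
    (∫ x in (0:ℝ)..l, (u x)^2) ≤ l^2 / 2 * ∫ x in (0:ℝ)..l, (u' x)^2 := by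
  set I := ∫ x in (0:ℝ)..l, (u' x)^2 with hI
  have hucont : ContinuousOn u (Set.Icc 0 l) :=
    fun x hx => (hu x hx).continuousAt.continuousWithinAt
  have hu'2 : IntervalIntegrable (fun t => (u' t)^2) volume 0 l := by
    apply ContinuousOn.intervalIntegrable
    rw [Set.uIcc_of_le hl.le]
    exact hu'.pow 2
  -- pointwise bound
  have key : ∀ x ∈ Set.Icc (0:ℝ) l, (u x)^2 ≤ x * I := by
    intro x hx
    obtain ⟨hx0, hxl⟩ := hx
    rcases eq_or_lt_of_le hx0 with h | h
    · rw [← h, h0]; simp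
    · have hsub : Set.Icc (0:ℝ) x ⊆ Set.Icc 0 l :=
        Set.Icc_subset_Icc le_rfl hxl
      have hftc : ∫ t in (0:ℝ)..x, u' t = u x - u 0 := by
        apply intervalIntegral.integral_eq_sub_of_hasDerivAt
        · intro t ht
          rw [Set.uIcc_of_le hx0] at ht
          exact hu t (hsub ht)
        · apply ContinuousOn.intervalIntegrable
          rw [Set.uIcc_of_le hx0]
          exact hu'.mono hsub
      have hux : u x = ∫ t in (0:ℝ)..x, u' t := by rw [hftc, h0]; ring
      have hcs : (∫ t in (0:ℝ)..x, u' t)^2 ≤ x * ∫ t in (0:ℝ)..x, (u' t)^2 :=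
        cs_aux x h u' (hu'.mono hsub)
      have hmono : (∫ t in (0:ℝ)..x, (u' t)^2) ≤ I := by
        apply intervalIntegral.integral_mono_interval le_rfl hx0 hxl
        · filter_upwards with t using sq_nonneg _
        · exact hu'2
      calc (u x)^2 = (∫ t in (0:ℝ)..x, u' t)^2 := by rw [hux]
        _ ≤ x * ∫ t in (0:ℝ)..x, (u' t)^2 := hcs
        _ ≤ x * I := by nlinarith [sq_nonneg x]
  have hIle : (∫ x in (0:ℝ)..l, (u x)^2) ≤ ∫ x in (0:ℝ)..l, x * I := by
    apply intervalIntegral.integral_mono_on hl.le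
    · apply ContinuousOn.intervalIntegrable
      rw [Set.uIcc_of_le hl.le]
      exact hucont.pow 2
    · exact (intervalIntegrable_id.mul_const I)
    · exact key
  have hval : (∫ x in (0:ℝ)..l, x * I) = l^2 / 2 * I := by
    rw [intervalIntegral.integral_mul_const, integral_id]
    ring
  exact hIle.trans_eq hval
end

section
/- For a continuously differentiable function u : [0,l] → ℝ (without boundary conditions), one has ∫₀ˡ u(x)² dx ≤ l² ∫₀ˡ u'(x)² dx + l(u(0)² + u(l)²). -/
open MeasureTheory intervalIntegral

/-- Cauchy–Schwarz for interval integrals of continuous functions. -/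
lemma cs_interval (a b : ℝ) (hab : a ≤ b) (g : ℝ → ℝ)
    (hg : ContinuousOn g (Set.Icc a b)) :
    (∫ x in a..b, g x) ^ 2 ≤ (b - a) * ∫ x in a..b, (g x) ^ 2 := by
  rcases eq_or_lt_of_le hab with h | h
  · subst h; simp
  have hgint : IntervalIntegrable g volume a b :=
    hg.intervalIntegrable_of_Icc hab
  have hg2int : IntervalIntegrable (fun x => (g x) ^ 2) volume a b :=
    (hg.pow 2).intervalIntegrable_of_Icc hab
  set S := ∫ x in a..b, g x with hS
  set Q := ∫ x in a..b, (g x) ^ 2 with hQ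
  set c := b - a with hc
  have hcpos : 0 < c := by rw [hc]; linarith
  set t := S / c with ht
  have h0 : 0 ≤ ∫ x in a..b, (g x - t) ^ 2 :=
    intervalIntegral.integral_nonneg hab (fun x _ => sq_nonneg _)
  have hexp : (∫ x in a..b, (g x - t) ^ 2) = Q - 2 * t * S + c * t ^ 2 := by
    have e : ∀ x : ℝ, (g x - t) ^ 2 = (g x) ^ 2 - (2 * t) * (g x) + t ^ 2 := by
      intro x; ring
    simp_rw [e]
    rw [intervalIntegral.integral_add (hg2int.sub (hgint.const_mul _))
        intervalIntegrable_const,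
      intervalIntegral.integral_sub hg2int (hgint.const_mul _),
      intervalIntegral.integral_const_mul, intervalIntegral.integral_const]
    simp only [smul_eq_mul]
    rfl
  rw [hexp, ht] at h0
  have h2 : c * (Q - 2 * (S / c) * S + c * (S / c) ^ 2) = c * Q - S ^ 2 := by
    field_simp
    ring
  have h3 : 0 ≤ c * (Q - 2 * (S / c) * S + c * (S / c) ^ 2) :=
    mul_nonneg (le_of_lt hcpos) h0
  rw [h2] at h3
  linarith

theorem poincare_inequality_with_boundary (l : ℝ) (hl : 0 < l) (u u' : ℝ → ℝ)
    (hu : ∀ x ∈ Set.Icc (0:ℝ) l, HasDerivAt u (u' x) x)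
    (hu' : ContinuousOn u' (Set.Icc 0 l)) :
    (∫ x in (0:ℝ)..l, (u x)^2)
      ≤ l^2 * (∫ x in (0:ℝ)..l, (u' x)^2) + l * ((u 0)^2 + (u l)^2) := by
  have hl0 : (0:ℝ) ≤ l := le_of_lt hl
  set I := ∫ x in (0:ℝ)..l, (u' x) ^ 2 with hI
  have hu'2int : IntervalIntegrable (fun x => (u' x) ^ 2) volume 0 l :=
    (hu'.pow 2).intervalIntegrable_of_Icc hl0
  have hucont : ContinuousOn u (Set.Icc 0 l) := fun x hx =>
    (hu x hx).continuousAt.continuousWithinAt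
  -- pointwise bound
  have key : ∀ x ∈ Set.Icc (0:ℝ) l, (u x) ^ 2 ≤ (u 0) ^ 2 + (u l) ^ 2 + l * I := by
    intro x hx
    obtain ⟨hx0, hxl⟩ := hx
    set P := ∫ t in (0:ℝ)..x, (u' t) ^ 2 with hP
    set R := ∫ t in x..l, (u' t) ^ 2 with hR
    have hsub1 : Set.Icc (0:ℝ) x ⊆ Set.Icc 0 l := Set.Icc_subset_Icc le_rfl hxl
    have hsub2 : Set.Icc x l ⊆ Set.Icc 0 l := Set.Icc_subset_Icc hx0 le_rfl
    have hint1 : IntervalIntegrable (fun t => (u' t) ^ 2) volume 0 x :=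
      ((hu'.pow 2).mono hsub1).intervalIntegrable_of_Icc hx0
    have hint2 : IntervalIntegrable (fun t => (u' t) ^ 2) volume x l :=
      ((hu'.pow 2).mono hsub2).intervalIntegrable_of_Icc hxl
    have hsplit : P + R = I := by
      rw [hP, hR, hI]
      exact intervalIntegral.integral_add_adjacent_intervals hint1 hint2
    have hPnn : 0 ≤ P := intervalIntegral.integral_nonneg hx0 (fun t _ => sq_nonneg _)
    have hRnn : 0 ≤ R := intervalIntegral.integral_nonneg hxl (fun t _ => sq_nonneg _)
    have ftc1 : (∫ t in (0:ℝ)..x, u' t) = u x - u 0 :=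
      intervalIntegral.integral_eq_sub_of_hasDerivAt
        (fun t ht => hu t (hsub1 (by rwa [Set.uIcc_of_le hx0] at ht)))
        ((hu'.mono hsub1).intervalIntegrable_of_Icc hx0)
    have ftc2 : (∫ t in x..l, u' t) = u l - u x :=
      intervalIntegral.integral_eq_sub_of_hasDerivAt
        (fun t ht => hu t (hsub2 (by rwa [Set.uIcc_of_le hxl] at ht)))
        ((hu'.mono hsub2).intervalIntegrable_of_Icc hxl)
    have cs1 : (u x - u 0) ^ 2 ≤ x * P := by
      rw [← ftc1]
      simpa using cs_interval 0 x hx0 u' (hu'.mono hsub1)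
    have cs2 : (u l - u x) ^ 2 ≤ (l - x) * R := by
      rw [← ftc2]
      exact cs_interval x l hxl u' (hu'.mono hsub2)
    have hPI : P ≤ I := by nlinarith
    have hRI : R ≤ I := by nlinarith
    nlinarith [cs1, cs2, sq_nonneg (2 * u 0 - u x), sq_nonneg (2 * u l - u x),
      mul_le_mul_of_nonneg_left hPI hx0,
      mul_le_mul_of_nonneg_left hRI (by linarith : (0:ℝ) ≤ l - x)]
  have hu2int : IntervalIntegrable (fun x => (u x) ^ 2) volume 0 l :=
    (hucont.pow 2).intervalIntegrable_of_Icc hl0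
  have hmono : (∫ x in (0:ℝ)..l, (u x) ^ 2)
      ≤ ∫ _x in (0:ℝ)..l, ((u 0) ^ 2 + (u l) ^ 2 + l * I) := by
    apply intervalIntegral.integral_mono_on hl0 hu2int intervalIntegrable_const
    exact key
  rw [intervalIntegral.integral_const] at hmono
  simp only [smul_eq_mul, sub_zero] at hmono
  nlinarith [hmono]
end

section
/- Let u : [0,T] → ℝ be twice continuously differentiable with |u''| ≤ M on [0,T], let 0 < θ < 1, let τ = T/j₀ with grid points t_s = sτ, and for 0 ≤ j < j₀ define the L1 discretization Δ^θ u(t_{j+1}) = (1/Γ(2-θ)) Σ_{s=0}^{j} (t_{j-s+1}^{1-θ} - t_{j-s}^{1-θ}) (u(t_{s+1}) - u(t_s))/τ. Then |∂_{0t_{j+1}}^θ u - Δ^θ u(t_{j+1})| ≤ C·M·τ^{2-θ} for a constant C independent of τ, j and u (one may take C depending only on θ, e.g. C = 2^θ/(4Γ(3-θ)) plus the midpoint-rule contribution). -/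
open MeasureTheory intervalIntegral

/-- Caputo fractional derivative of order `θ ∈ (0,1)` with base point `0`. -/
noncomputable def caputo (θ : ℝ) (v : ℝ → ℝ) (t : ℝ) : ℝ :=
  (1 / Real.Gamma (1 - θ)) * ∫ η in (0:ℝ)..t, deriv v η * (t - η) ^ (-θ)

/-- L1 discretization of the Caputo derivative of order `θ` on a uniform grid
with step `τ`, evaluated at `t_{j+1} = (j+1)τ`. -/
noncomputable def l1Caputo (θ τ : ℝ) (u : ℝ → ℝ) (j : ℕ) : ℝ :=
  (1 / Real.Gamma (2 - θ)) *
    ∑ s ∈ Finset.range (j+1),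
      ((((j - s + 1 : ℕ) : ℝ) * τ) ^ (1-θ) - (((j - s : ℕ) : ℝ) * τ) ^ (1-θ)) *
        (u (((s:ℝ)+1) * τ) - u ((s:ℝ) * τ)) / τ

lemma kern_intble {θ : ℝ} (hθ : θ < 1) (t a b : ℝ) :
    IntervalIntegrable (fun η => (t - η) ^ (-θ)) volume a b := by
  have h := (intervalIntegrable_rpow' (a := t - a) (b := t - b)
    (r := -θ) (by linarith)).comp_sub_left t
  simpa using h

lemma kern_integral {θ : ℝ} (hθ : θ < 1) (t a b : ℝ) :
    ∫ η in a..b, (t - η) ^ (-θ)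
      = ((t - a) ^ (1 - θ) - (t - b) ^ (1 - θ)) / (1 - θ) := by
  rw [integral_comp_sub_left (fun x : ℝ => x ^ (-θ)) t,
    integral_rpow (Or.inl (by linarith))]
  have h1 : -θ + 1 = 1 - θ := by ring
  rw [h1]


set_option maxHeartbeats 1000000 in
theorem l1_truncation_error (θ : ℝ) (hθ : θ ∈ Set.Ioo (0:ℝ) 1) :
    ∃ C > 0, ∀ T : ℝ, 0 < T → ∀ j₀ : ℕ, 0 < j₀ → ∀ u : ℝ → ℝ, ∀ M : ℝ,
      ContDiff ℝ 2 u →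
      (∀ t ∈ Set.Icc (0:ℝ) T, |deriv (deriv u) t| ≤ M) →
      ∀ j : ℕ, j < j₀ →
        |caputo θ u (((j:ℝ)+1) * (T / j₀)) - l1Caputo θ (T / j₀) u j|
          ≤ C * M * (T / j₀) ^ (2 - θ) := by
  obtain ⟨hθ0, hθ1⟩ := hθ
  have h1θ : (0:ℝ) < 1 - θ := by linarith
  have hΓ : 0 < Real.Gamma (1 - θ) := Real.Gamma_pos_of_pos h1θ
  have hΓ2 : Real.Gamma (2 - θ) = (1 - θ) * Real.Gamma (1 - θ) := by
    rw [show (2 - θ : ℝ) = (1 - θ) + 1 by ring, Real.Gamma_add_one h1θ.ne']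
  refine ⟨(1 / Real.Gamma (1 - θ)) * (1 + 1 / (1 - θ)), by positivity, ?_⟩
  intro T hT j₀ hj₀ u M hu hM j hj
  have hτ : 0 < T / (j₀:ℝ) := div_pos hT (by exact_mod_cast hj₀)
  set τ : ℝ := T / (j₀:ℝ) with hτdef
  set t : ℝ := ((j:ℝ) + 1) * τ with htdef
  set p : ℕ → ℝ := fun s => (s:ℝ) * τ with hpdef
  set k : ℝ → ℝ := fun η => (t - η) ^ (-θ) with hkdef
  set δ : ℕ → ℝ := fun s => (u (p (s+1)) - u (p s)) / τ with hδdef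
  set c : ℕ → ℝ := fun s => (t - p s) ^ (-θ) with hcdef
  set E : ℕ → ℝ := fun s => ∫ η in p s..p (s+1), (deriv u η - δ s) * k η with hEdef
  -- grid facts
  have hp0 : p 0 = 0 := by simp [hpdef]
  have hpsucc : ∀ s : ℕ, p (s+1) = ((s:ℝ)+1) * τ := by
    intro s; simp only [hpdef]; push_cast; ring
  have hpt : p (j+1) = t := by rw [hpsucc]
  have hstep : ∀ s : ℕ, p (s+1) - p s = τ := by
    intro s; rw [hpsucc]; simp only [hpdef]; ring
  have hpmono : ∀ s : ℕ, p s ≤ p (s+1) := by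
    intro s; have := hstep s; linarith
  have hmono : Monotone p := monotone_nat_of_le_succ hpmono
  have hp_nonneg : ∀ s : ℕ, 0 ≤ p s := by
    intro s; simp only [hpdef]; positivity
  have htT : t ≤ T := by
    have hj' : ((j:ℝ)+1) ≤ (j₀:ℝ) := by exact_mod_cast hj
    have h2 : (j₀:ℝ) * τ = T := by
      rw [hτdef]; field_simp
    nlinarith
  have hIccsub : ∀ s : ℕ, s ≤ j → ∀ η, η ∈ Set.Icc (p s) (p (s+1)) →
      η ∈ Set.Icc (0:ℝ) T := by
    intro s hs η hη
    refine ⟨le_trans (hp_nonneg s) hη.1, le_trans hη.2 (le_trans ?_ htT)⟩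
    rw [← hpt]; exact hmono (Nat.succ_le_succ hs)
  -- derivatives
  have hud : Differentiable ℝ u := hu.differentiable (by norm_num)
  have hderiv1 : ContDiff ℝ 1 (deriv u) :=
    (contDiff_succ_iff_deriv.mp (by exact_mod_cast (show (2:WithTop ℕ∞) = 1+1 by norm_num) ▸ hu)).2.2
  have hu'd : Differentiable ℝ (deriv u) := hderiv1.differentiable (by norm_num)
  have hu'c : Continuous (deriv u) := hu'd.continuous
  have hM0 : 0 ≤ M := le_trans (abs_nonneg _) (hM 0 ⟨le_refl 0, hT.le⟩)
  have hlip : ∀ x ∈ Set.Icc (0:ℝ) T, ∀ y ∈ Set.Icc (0:ℝ) T,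
      |deriv u y - deriv u x| ≤ M * |y - x| := by
    intro x hx y hy
    have := (convex_Icc (0:ℝ) T).norm_image_sub_le_of_norm_hasDerivWithin_le
      (f := deriv u) (f' := deriv (deriv u))
      (fun z hz => (hu'd z).hasDerivAt.hasDerivWithinAt)
      (fun z hz => by simpa [Real.norm_eq_abs] using hM z hz) hx hy
    simpa [Real.norm_eq_abs] using this
  -- integrability
  have hkint : ∀ a b : ℝ, IntervalIntegrable k volume a b := fun a b =>
    kern_intble hθ1 t a b
  have huk_int : ∀ a b : ℝ, IntervalIntegrable (fun η => deriv u η * k η) volume a b :=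
    fun a b => (hkint a b).continuousOn_mul hu'c.continuousOn
  have hFTC : ∀ a b : ℝ, ∫ η in a..b, deriv u η = u b - u a := fun a b =>
    integral_deriv_eq_sub (fun x _ => hud x) (hu'c.intervalIntegrable a b)
  -- caputo as a sum over subintervals
  have hcap : caputo θ u t = (1 / Real.Gamma (1-θ)) * ∑ s ∈ Finset.range (j+1),
      ∫ η in p s..p (s+1), deriv u η * k η := by
    unfold caputo
    congr 1
    rw [intervalIntegral.sum_integral_adjacent_intervals (fun s _ => huk_int _ _), hp0, hpt]
  -- l1Caputo as a sum of kernel integrals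
  have hl1 : l1Caputo θ τ u j = (1 / Real.Gamma (1-θ)) * ∑ s ∈ Finset.range (j+1),
      ∫ η in p s..p (s+1), δ s * k η := by
    unfold l1Caputo
    rw [Finset.mul_sum, Finset.mul_sum]
    refine Finset.sum_congr rfl (fun s hs => ?_)
    have hsle : s ≤ j := Nat.lt_succ_iff.mp (Finset.mem_range.mp hs)
    have hc1 : (((j - s + 1 : ℕ)):ℝ) * τ = t - p s := by
      have : ((j - s : ℕ):ℝ) = (j:ℝ) - s := by
        push_cast [Nat.cast_sub hsle]; ring
      push_cast [this]
      simp only [htdef, hpdef]; ring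
    have hc2 : (((j - s : ℕ)):ℝ) * τ = t - p (s+1) := by
      have : ((j - s : ℕ):ℝ) = (j:ℝ) - s := by
        push_cast [Nat.cast_sub hsle]; ring
      rw [this, hpsucc]
      simp only [htdef]; ring
    rw [intervalIntegral.integral_const_mul, kern_integral hθ1, hc1, hc2, hΓ2,
      hδdef]
    simp only [hpsucc s, hpdef]
    field_simp
    push_cast
    ring_nf
  have hdiff : caputo θ u t - l1Caputo θ τ u j
      = (1 / Real.Gamma (1-θ)) * ∑ s ∈ Finset.range (j+1), E s := by
    rw [hcap, hl1, ← mul_sub, ← Finset.sum_sub_distrib]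
    congr 1
    refine Finset.sum_congr rfl (fun s hs => ?_)
    rw [hEdef, ← intervalIntegral.integral_sub (huk_int _ _)
      ((hkint _ _).const_mul (δ s))]
    refine intervalIntegral.integral_congr (fun η _ => by ring)
  -- |u'(η) - δ s| ≤ M τ on each subinterval
  have hδbound : ∀ s : ℕ, s ≤ j → ∀ η ∈ Set.Icc (p s) (p (s+1)),
      |deriv u η - δ s| ≤ M * τ := by
    intro s hs η hη
    have hηT := hIccsub s hs η hη
    have key : deriv u η - δ s
        = (∫ ζ in p s..p (s+1), (deriv u η - deriv u ζ)) / τ := by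
      rw [intervalIntegral.integral_sub intervalIntegrable_const
        (hu'c.intervalIntegrable _ _), hFTC, intervalIntegral.integral_const,
        hstep, hδdef, smul_eq_mul]
      field_simp
    rw [key, abs_div, abs_of_pos hτ, div_le_iff₀ hτ]
    have hbig : ‖∫ ζ in p s..p (s+1), (deriv u η - deriv u ζ)‖
        ≤ (M * τ) * |p (s+1) - p s| := by
      refine intervalIntegral.norm_integral_le_of_norm_le_const (fun ζ hζ => ?_)
      rw [Set.uIoc_of_le (hpmono s)] at hζ
      have hζ' : ζ ∈ Set.Icc (p s) (p (s+1)) := Set.Ioc_subset_Icc_self hζ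
      have hζT := hIccsub s hs ζ hζ'
      have h1 := hlip ζ hζT η hηT
      have h2 : |η - ζ| ≤ τ := by
        rw [abs_le]
        constructor <;> [skip; skip] <;>
          [(have := hη.1; have := hζ'.2; have := hstep s; linarith);
           (have := hη.2; have := hζ'.1; have := hstep s; linarith)]
      rw [Real.norm_eq_abs]
      calc |deriv u η - deriv u ζ| ≤ M * |η - ζ| := h1
        _ ≤ M * τ := mul_le_mul_of_nonneg_left h2 hM0
    rw [Real.norm_eq_abs, hstep s, abs_of_pos hτ] at hbig
    linarith [mul_le_mul_of_nonneg_left (le_refl (M*τ)) hM0]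
  -- main estimate on intervals away from the endpoint
  have hEs : ∀ s : ℕ, s < j → |E s| ≤ M * τ * τ * (c (s+1) - c s) := by
    intro s hsj
    have hsle : s ≤ j := hsj.le
    have hts1 : 0 < t - p (s+1) := by
      have h1 : p (s+1) ≤ p j := hmono hsj
      have h2 : p j < t := by rw [← hpt]; have := hstep j; linarith
      linarith
    have hgc : Continuous (fun η => deriv u η - δ s) := hu'c.sub continuous_const
    have hmean : ∫ η in p s..p (s+1), (deriv u η - δ s) = 0 := by
      rw [intervalIntegral.integral_sub (hu'c.intervalIntegrable _ _)
        intervalIntegrable_const, hFTC, intervalIntegral.integral_const, hstep,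
        hδdef, smul_eq_mul]
      field_simp
      ring
    have hE2 : E s = ∫ η in p s..p (s+1), (deriv u η - δ s) * (k η - c s) := by
      rw [hEdef]
      have hint1 : IntervalIntegrable (fun η => (deriv u η - δ s) * k η)
          volume (p s) (p (s+1)) := (hkint _ _).continuousOn_mul hgc.continuousOn
      have hint2 : IntervalIntegrable (fun η => (deriv u η - δ s) * c s)
          volume (p s) (p (s+1)) := (hgc.intervalIntegrable _ _).mul_const _
      rw [show (∫ η in p s..p (s+1), (deriv u η - δ s) * (k η - c s))
          = ∫ η in p s..p (s+1),
              ((deriv u η - δ s) * k η - (deriv u η - δ s) * c s) from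
          intervalIntegral.integral_congr (fun η _ => by ring),
        intervalIntegral.integral_sub hint1 hint2,
        intervalIntegral.integral_mul_const, hmean, zero_mul, sub_zero]
    have hkc : ∀ η ∈ Set.Icc (p s) (p (s+1)), c s ≤ k η ∧ k η ≤ c (s+1) := by
      intro η hη
      have h1 : 0 < t - η := by linarith [hη.2]
      constructor
      · simp only [hkdef, hcdef]
        exact Real.rpow_le_rpow_of_nonpos h1 (by linarith [hη.1]) (by linarith)
      · simp only [hkdef, hcdef]
        exact Real.rpow_le_rpow_of_nonpos hts1 (by linarith [hη.2]) (by linarith)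
    have hbint : IntervalIntegrable (fun η => M * τ * (k η - c s))
        volume (p s) (p (s+1)) :=
      ((hkint _ _).sub intervalIntegrable_const).const_mul _
    have hb1 : |E s| ≤ |∫ η in p s..p (s+1), M * τ * (k η - c s)| := by
      rw [hE2, ← Real.norm_eq_abs (∫ η in p s..p (s+1), (deriv u η - δ s) * (k η - c s))]
      refine le_trans (intervalIntegral.norm_integral_le_of_norm_le (hpmono s) ?_ hbint) (le_abs_self _)
      refine Filter.Eventually.of_forall fun η hη => ?_
      have hη' : η ∈ Set.Icc (p s) (p (s+1)) := Set.Ioc_subset_Icc_self hη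
      have h0 : 0 ≤ k η - c s := by linarith [(hkc η hη').1]
      rw [Real.norm_eq_abs, abs_mul, abs_of_nonneg h0]
      exact mul_le_mul_of_nonneg_right (hδbound s hsle η hη') h0
    have hb0 : 0 ≤ ∫ η in p s..p (s+1), M * τ * (k η - c s) :=
      intervalIntegral.integral_nonneg (hpmono s) (fun η hη => by
        have := (hkc η hη).1
        have := mul_nonneg hM0 hτ.le
        nlinarith)
    have hb2 : ∫ η in p s..p (s+1), M * τ * (k η - c s)
        ≤ M * τ * τ * (c (s+1) - c s) := by
      rw [intervalIntegral.integral_const_mul,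
        intervalIntegral.integral_sub (hkint _ _) intervalIntegrable_const,
        intervalIntegral.integral_const, hstep, smul_eq_mul]
      have hik : ∫ η in p s..p (s+1), k η ≤ τ * c (s+1) := by
        have h := intervalIntegral.integral_mono_on (hpmono s) (hkint _ _)
          intervalIntegrable_const (fun η hη => (hkc η hη).2)
        rw [intervalIntegral.integral_const, hstep, smul_eq_mul] at h
        exact h
      have hMτ : 0 ≤ M * τ := mul_nonneg hM0 hτ.le
      nlinarith
    calc |E s| ≤ |∫ η in p s..p (s+1), M * τ * (k η - c s)| := hb1
      _ = ∫ η in p s..p (s+1), M * τ * (k η - c s) := abs_of_nonneg hb0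
      _ ≤ M * τ * τ * (c (s+1) - c s) := hb2
  -- last interval
  have htpj : t - p j = τ := by rw [← hpt]; have := hstep j; linarith
  have hEj : |E j| ≤ M * τ * (τ ^ (1-θ) / (1-θ)) := by
    have hb1 : |E j| ≤ |∫ η in p j..p (j+1), M * τ * k η| := by
      rw [hEdef, ← Real.norm_eq_abs (∫ η in p j..p (j+1), (deriv u η - δ j) * k η)]
      refine le_trans (intervalIntegral.norm_integral_le_of_norm_le (hpmono j) ?_ ((hkint _ _).const_mul _)) (le_abs_self _)
      refine Filter.Eventually.of_forall fun η hη => ?_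
      have hη' : η ∈ Set.Icc (p j) (p (j+1)) := Set.Ioc_subset_Icc_self hη
      have hk0 : 0 ≤ k η := by
        simp only [hkdef]
        apply Real.rpow_nonneg
        have := hη'.2; rw [hpt] at this; linarith
      rw [Real.norm_eq_abs, abs_mul, abs_of_nonneg hk0]
      exact mul_le_mul_of_nonneg_right (hδbound j le_rfl η hη') hk0
    have hcalc : ∫ η in p j..p (j+1), M * τ * k η = M * τ * (τ ^ (1-θ) / (1-θ)) := by
      rw [intervalIntegral.integral_const_mul]
      simp only [hkdef]
      rw [kern_integral hθ1, htpj, hpt, sub_self,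
        Real.zero_rpow (by linarith : (1-θ:ℝ) ≠ 0), sub_zero]
    rw [hcalc] at hb1
    have : 0 ≤ M * τ * (τ ^ (1-θ) / (1-θ)) :=
      mul_nonneg (mul_nonneg hM0 hτ.le)
        (div_nonneg (Real.rpow_nonneg hτ.le _) h1θ.le)
    rwa [abs_of_nonneg this] at hb1
  -- assemble
  have hc0 : 0 ≤ c 0 := by
    simp only [hcdef]
    apply Real.rpow_nonneg
    rw [hp0, htdef, sub_zero]
    have := Nat.cast_nonneg (α := ℝ) j
    nlinarith
  have hcj : c j = τ ^ (-θ) := by simp only [hcdef]; rw [htpj]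
  have hA : τ * τ * τ ^ (-θ) = τ ^ (2-θ) := by
    rw [show (2-θ:ℝ) = 1 + 1 + (-θ) by ring, Real.rpow_add hτ, Real.rpow_add hτ,
      Real.rpow_one]
  have hB : τ * τ ^ (1-θ) = τ ^ (2-θ) := by
    rw [show (2-θ:ℝ) = 1 + (1-θ) by ring, Real.rpow_add hτ, Real.rpow_one]
  have hsum : |∑ s ∈ Finset.range (j+1), E s|
      ≤ M * τ ^ (2-θ) * (1 + 1/(1-θ)) := by
    rw [Finset.sum_range_succ]
    have h1 : |∑ s ∈ Finset.range j, E s + E j|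
        ≤ (∑ s ∈ Finset.range j, |E s|) + |E j| :=
      le_trans (abs_add_le _ _) (by gcongr; exact Finset.abs_sum_le_sum_abs _ _)
    have h2 : ∑ s ∈ Finset.range j, |E s| ≤ M * τ * τ * (c j - c 0) := by
      calc ∑ s ∈ Finset.range j, |E s|
          ≤ ∑ s ∈ Finset.range j, M * τ * τ * (c (s+1) - c s) :=
            Finset.sum_le_sum (fun s hs => hEs s (Finset.mem_range.mp hs))
        _ = M * τ * τ * (c j - c 0) := by
            rw [← Finset.mul_sum, Finset.sum_range_sub]
    have h3 : M * τ * τ * (c j - c 0) ≤ M * τ ^ (2-θ) := by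
      have hMτ2 : 0 ≤ M * τ * τ := mul_nonneg (mul_nonneg hM0 hτ.le) hτ.le
      have : M * τ * τ * (c j - c 0) ≤ M * τ * τ * c j := by nlinarith
      calc M * τ * τ * (c j - c 0) ≤ M * τ * τ * c j := this
        _ = M * (τ * τ * τ ^ (-θ)) := by rw [hcj]; ring
        _ = M * τ ^ (2-θ) := by rw [hA]
    have h4 : M * τ * (τ ^ (1-θ) / (1-θ)) = M * τ ^ (2-θ) * (1/(1-θ)) := by
      rw [← hB]; ring
    calc |∑ s ∈ Finset.range j, E s + E j|
        ≤ (∑ s ∈ Finset.range j, |E s|) + |E j| := h1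
      _ ≤ M * τ ^ (2-θ) + M * τ ^ (2-θ) * (1/(1-θ)) := by
          rw [← h4]; exact add_le_add (le_trans h2 h3) hEj
      _ = M * τ ^ (2-θ) * (1 + 1/(1-θ)) := by ring
  rw [hdiff, abs_mul, abs_of_pos (by positivity : (0:ℝ) < 1 / Real.Gamma (1-θ))]
  calc (1 / Real.Gamma (1-θ)) * |∑ s ∈ Finset.range (j+1), E s|
      ≤ (1 / Real.Gamma (1-θ)) * (M * τ ^ (2-θ) * (1 + 1/(1-θ))) :=
        mul_le_mul_of_nonneg_left hsum (by positivity)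
    _ = (1 / Real.Gamma (1-θ)) * (1 + 1/(1-θ)) * M * τ ^ (2-θ) := by ring
end

section
/- Let 0 < θ < 1, τ > 0, t_s = sτ, and set c_s = (t_{s+1}^{1-θ} - t_s^{1-θ})/Γ(2-θ) for s ≥ 0. Then for any real sequence v⁰, v¹, …, v^{j+1}, the L1 discrete Caputo derivative Δ^θ v^{j+1} = Σ_{s=0}^{j} c_{j-s} (v^{s+1} - v^s)/τ satisfies v^{j+1}·Δ^θ v^{j+1} ≥ (1/2)·Δ^θ (v²)^{j+1}, where Δ^θ (v²)^{j+1} = Σ_{s=0}^{j} c_{j-s} ((v^{s+1})² - (v^s)²)/τ. -/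
lemma abel_aux (c E : ℕ → ℝ) (hc : ∀ k, c (k+1) ≤ c k) (hE : ∀ k, 0 ≤ E k)
    (hE0 : E 0 = 0) : ∀ n, c n * E n ≤ ∑ k ∈ Finset.range n, c k * (E (k+1) - E k) := by
  intro n
  induction n with
  | zero => simp [hE0]
  | succ n ih =>
    rw [Finset.sum_range_succ]
    have h1 : c (n+1) * E (n+1) ≤ c n * E (n+1) :=
      mul_le_mul_of_nonneg_right (hc n) (hE _)
    linarith

theorem discrete_caputo_product_inequality (θ τ : ℝ) (hθ : θ ∈ Set.Ioo (0:ℝ) 1)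
    (hτ : 0 < τ) (j : ℕ) (v : ℕ → ℝ)
    (c : ℕ → ℝ)
    (hc : ∀ s : ℕ, c s = ((((s:ℝ)+1) * τ) ^ (1-θ) - ((s:ℝ) * τ) ^ (1-θ)) / Real.Gamma (2 - θ)) :
    v (j+1) * ∑ s ∈ Finset.range (j+1), c (j - s) * (v (s+1) - v s) / τ
      ≥ (1/2) * ∑ s ∈ Finset.range (j+1), c (j - s) * ((v (s+1))^2 - (v s)^2) / τ := by
  obtain ⟨hθ0, hθ1⟩ := hθ
  set p : ℝ := 1 - θ with hp
  have hp0 : 0 < p := by simp [hp]; linarith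
  have hp1 : p < 1 := by simp [hp]; linarith
  have hΓ : 0 < Real.Gamma (2 - θ) := Real.Gamma_pos_of_pos (by linarith)
  -- concavity (midpoint)
  have hconc : ∀ s : ℕ, ((s:ℝ)*τ)^p + (((s:ℝ)+2)*τ)^p ≤ 2 * (((s:ℝ)+1)*τ)^p := by
    intro s
    have ha : ((s:ℝ)*τ) ∈ Set.Ici (0:ℝ) := Set.mem_Ici.mpr (by positivity)
    have hb : (((s:ℝ)+2)*τ) ∈ Set.Ici (0:ℝ) := Set.mem_Ici.mpr (by positivity)
    have h := (Real.concaveOn_rpow hp0.le hp1.le).2 ha hb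
      (by norm_num : (0:ℝ) ≤ 1/2) (by norm_num : (0:ℝ) ≤ 1/2) (by norm_num)
    rw [smul_eq_mul, smul_eq_mul, smul_eq_mul, smul_eq_mul] at h
    have heq : (1/2)*((s:ℝ)*τ) + (1/2)*(((s:ℝ)+2)*τ) = ((s:ℝ)+1)*τ := by ring
    rw [heq] at h
    linarith
  have hcnn : ∀ s, 0 ≤ c s := by
    intro s
    rw [hc s]
    apply div_nonneg _ hΓ.le
    have : ((s:ℝ)*τ)^p ≤ (((s:ℝ)+1)*τ)^p := by
      apply Real.rpow_le_rpow (by positivity) (by nlinarith) hp0.le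
    linarith
  have hcmono : ∀ s, c (s+1) ≤ c s := by
    intro s
    rw [hc s, hc (s+1)]
    push_cast
    have h := hconc s
    have h2 : ((s:ℝ)+1+1) = (s:ℝ)+2 := by ring
    rw [h2, div_le_div_iff₀ hΓ hΓ]
    nlinarith [mul_le_mul_of_nonneg_right h hΓ.le]
  set e : ℕ → ℝ := fun s => (v (j+1) - v s)^2 with he
  set E : ℕ → ℝ := fun k => e (j+1-k) with hE
  have key : v (j+1) * ∑ s ∈ Finset.range (j+1), c (j - s) * (v (s+1) - v s) / τ
      - (1/2) * ∑ s ∈ Finset.range (j+1), c (j - s) * ((v (s+1))^2 - (v s)^2) / τ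
      = (1/(2*τ)) * ∑ s ∈ Finset.range (j+1), c (j-s) * (e s - e (s+1)) := by
    rw [Finset.mul_sum, Finset.mul_sum, Finset.mul_sum, ← Finset.sum_sub_distrib]
    apply Finset.sum_congr rfl
    intro s _
    simp only [he]
    field_simp
    ring
  have hsum : ∑ s ∈ Finset.range (j+1), c (j-s) * (e s - e (s+1))
      = ∑ k ∈ Finset.range (j+1), c k * (E (k+1) - E k) := by
    rw [← Finset.sum_range_reflect]
    apply Finset.sum_congr rfl
    intro i hi
    have hij : i ≤ j := Nat.lt_succ_iff.mp (Finset.mem_range.mp hi)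
    have h0 : j + 1 - 1 - i = j - i := by omega
    rw [h0]
    simp only [hE]
    have a1 : j - (j - i) = i := by omega
    have a2 : j + 1 - (i + 1) = j - i := by omega
    have a3 : j + 1 - i = j - i + 1 := by omega
    rw [a1, a2, a3]
  have hE0 : E 0 = 0 := by simp [hE, he]
  have hEnn : ∀ k, 0 ≤ E k := fun k => sq_nonneg _
  have habel := abel_aux c E hcmono hEnn hE0 (j+1)
  have hnn : 0 ≤ ∑ s ∈ Finset.range (j+1), c (j-s) * (e s - e (s+1)) := by
    rw [hsum]
    exact le_trans (mul_nonneg (hcnn _) (hEnn _)) habel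
  have : 0 ≤ v (j+1) * ∑ s ∈ Finset.range (j+1), c (j - s) * (v (s+1) - v s) / τ
      - (1/2) * ∑ s ∈ Finset.range (j+1), c (j - s) * ((v (s+1))^2 - (v s)^2) / τ := by
    rw [key]
    exact mul_nonneg (by positivity) hnn
  linarith
end

section
/- For a grid function y on {x_i = ih : 0 ≤ i ≤ N, Nh = l} (no boundary conditions), ‖y‖² ≤ l²‖y_{x̄}]‖² + l(y₀² + y_N²), where ‖y‖² = Σ_{i=1}^{N-1} y_i² h and ‖y_{x̄}]‖² = Σ_{i=1}^{N} ((y_i - y_{i-1})/h)² h. -/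
theorem discrete_poincare_with_boundary (l h : ℝ) (N : ℕ) (hl : 0 < l) (hN : 0 < N)
    (hh : h = l / N) (y : ℕ → ℝ) :
    ∑ i ∈ Finset.Ico 1 N, (y i)^2 * h
      ≤ l^2 * (∑ i ∈ Finset.Icc 1 N, ((y i - y (i-1)) / h)^2 * h)
        + l * ((y 0)^2 + (y N)^2) := by
  have hN0 : (0:ℝ) < N := by exact_mod_cast hN
  have hhpos : 0 < h := by rw [hh]; positivity
  have hNh : (N:ℝ) * h = l := by rw [hh]; field_simp
  set D := ∑ i ∈ Finset.Icc 1 N, ((y i - y (i-1)) / h)^2 * h with hD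
  have hDnn : 0 ≤ D := Finset.sum_nonneg (fun i _ => by positivity)
  set S := ∑ j ∈ Finset.range N, (y (j+1) - y j)^2 with hS
  have hSnn : 0 ≤ S := Finset.sum_nonneg (fun i _ => by positivity)
  have hSD : S = h * D := by
    rw [hD, Finset.mul_sum, hS]
    rw [show Finset.Icc 1 N = Finset.Ico 1 (N+1) by rw [Finset.Ico_add_one_right_eq_Icc]]
    rw [Finset.sum_Ico_eq_sum_range]
    simp only [Nat.add_sub_cancel]
    apply Finset.sum_congr rfl
    intro j _
    have h1 : 1 + j - 1 = j := by omega
    have h2 : 1 + j = j + 1 := by omega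
    rw [h1, h2]
    field_simp
  have key : ∀ a b : ℕ, a ≤ b → b ≤ N → (y b - y a)^2 ≤ ((b:ℝ) - a) * (h * D) := by
    intro a b hab hbN
    have htel : y b - y a = ∑ j ∈ Finset.Ico a b, (y (j+1) - y j) := by
      rw [Finset.sum_Ico_eq_sub _ hab, Finset.sum_range_sub, Finset.sum_range_sub]
      ring
    have hcs : (∑ j ∈ Finset.Ico a b, (y (j+1) - y j))^2
        ≤ ((b - a : ℕ) : ℝ) * ∑ j ∈ Finset.Ico a b, (y (j+1) - y j)^2 := by
      have := Finset.sum_mul_sq_le_sq_mul_sq (Finset.Ico a b) (fun _ => (1:ℝ))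
        (fun j => y (j+1) - y j)
      simpa [Nat.card_Ico] using this
    have hsub : ∑ j ∈ Finset.Ico a b, (y (j+1) - y j)^2 ≤ S := by
      rw [hS]
      apply Finset.sum_le_sum_of_subset_of_nonneg
      · intro x hx
        simp only [Finset.mem_Ico, Finset.mem_range] at *
        omega
      · intro i _ _; positivity
    have hcast : ((b - a : ℕ) : ℝ) = (b:ℝ) - a := by
      push_cast [Nat.cast_sub hab]; ring
    have hba : (0:ℝ) ≤ ((b - a : ℕ) : ℝ) := Nat.cast_nonneg _
    calc (y b - y a)^2 = (∑ j ∈ Finset.Ico a b, (y (j+1) - y j))^2 := by rw [htel]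
      _ ≤ ((b - a : ℕ) : ℝ) * ∑ j ∈ Finset.Ico a b, (y (j+1) - y j)^2 := hcs
      _ ≤ ((b - a : ℕ) : ℝ) * S := by
          exact mul_le_mul_of_nonneg_left hsub hba
      _ = ((b:ℝ) - a) * (h * D) := by rw [hcast, hSD]
  calc ∑ i ∈ Finset.Ico 1 N, (y i)^2 * h
      ≤ ∑ i ∈ Finset.Ico 1 N, ((y 0)^2 + (y N)^2 + l * D) * h := by
        apply Finset.sum_le_sum
        intro i hi
        obtain ⟨hi1, hiN⟩ := Finset.mem_Ico.mp hi
        have hA := key 0 i (Nat.zero_le _) (le_of_lt hiN)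
        have hB := key i N (le_of_lt hiN) le_rfl
        have h2 : ((i:ℝ) - (0:ℕ)) * (h * D) + ((N:ℝ) - i) * (h * D) = l * D := by
          rw [← hNh]; push_cast; ring
        have hAB : (y i - y 0)^2 + (y N - y i)^2 ≤ l * D := by
          have := add_le_add hA hB
          linarith
        have hpt : (y i)^2 ≤ (y 0)^2 + (y N)^2 + l * D := by
          nlinarith [sq_nonneg (y i - y 0 - y N), sq_nonneg (y 0 - y N)]
        exact mul_le_mul_of_nonneg_right hpt hhpos.le
    _ ≤ l * ((y 0)^2 + (y N)^2 + l * D) := by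
        rw [Finset.sum_const, Nat.card_Ico, nsmul_eq_mul]
        have hle : ((N - 1:ℕ):ℝ) ≤ (N:ℝ) := by exact_mod_cast Nat.sub_le N 1
        have h1 : ((N - 1:ℕ):ℝ) * h ≤ l := by
          calc ((N - 1:ℕ):ℝ) * h ≤ (N:ℝ) * h := mul_le_mul_of_nonneg_right hle hhpos.le
            _ = l := hNh
        have hc : (0:ℝ) ≤ (y 0)^2 + (y N)^2 + l * D := by positivity
        calc ((N - 1:ℕ):ℝ) * (((y 0)^2 + (y N)^2 + l * D) * h)
            = (((N - 1:ℕ):ℝ) * h) * ((y 0)^2 + (y N)^2 + l * D) := by ring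
          _ ≤ l * ((y 0)^2 + (y N)^2 + l * D) := mul_le_mul_of_nonneg_right h1 hc
    _ = l^2 * D + l * ((y 0)^2 + (y N)^2) := by ring
end
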